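/- Let Δ be the abstract simplicial complex consisting of an n-simplex δ (a set with n+1 elements) together with all its nonempty subsets, let Q be an abstract simplicial complex, let φ: Q → Δ be a simplicial map, and let α ∈ C_n(Q) be an n-chain. If φ_*(∂α) = ∂δ in C_{n−1}(Δ), then φ_*(α) = δ in C_n(Δ). -/
import Mathlib


open scoped Classical
open Finset

/-- An abstract simplicial complex on the vertex type `V`: a finite collection of
nonempty finite subsets (simplices) closed under passing to nonempty subsets. -/
def IsAbstractComplex {V : Type*} (K : Finset (Finset V)) : Prop :=
  (∀ σ ∈ K, σ.Nonempty) ∧ ∀ σ ∈ K, ∀ τ ⊆ σ, τ.Nonempty → τ ∈ K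

/-- The boundary operator on `𝔽₂`-chains: an `m`-simplex is sent to
the sum of its `(m-1)`-element subsets, extended `𝔽₂`-linearly. -/
noncomputable def chainBoundary {V : Type*} [Fintype V] (c : Finset V → ZMod 2) :
    Finset V → ZMod 2 := fun τ =>
  ∑ σ ∈ Finset.univ.filter (fun σ : Finset V => τ ⊆ σ ∧ σ.card = τ.card + 1), c σ

/-- The map on `𝔽₂`-chains induced by a map of vertices: a simplex is sent to its image
if the image has the same cardinality, and to `0` otherwise, extended `𝔽₂`-linearly. -/
noncomputable def chainPush {V W : Type*} [Fintype V] (φ : V → W)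
    (c : Finset V → ZMod 2) : Finset W → ZMod 2 := fun ρ =>
  ∑ σ ∈ Finset.univ.filter (fun σ : Finset V => σ.image φ = ρ ∧ σ.card = ρ.card), c σ

section Helpers

variable {V W : Type*}

/-- Case A: if `φ` maps `σ` bijectively onto `δ`, there is exactly one `v ∈ σ`
whose removal yields image `δ.erase w`. -/
lemma caseA (φ : V → W) (σ : Finset V) (δ : Finset W) (w : W) (hw : w ∈ δ)
    (himg : σ.image φ = δ) (hcard : σ.card = δ.card) :
    (σ.filter (fun v => (σ.erase v).image φ = δ.erase w)).card = 1 := by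
  have hinj : Set.InjOn φ σ := Finset.injOn_of_card_image_eq (by rw [himg, hcard])
  obtain ⟨v₀, hv₀σ, hv₀⟩ : ∃ v ∈ σ, φ v = w := by
    have := himg ▸ hw
    simpa [Finset.mem_image] using this
  have him : ∀ v ∈ σ, (σ.erase v).image φ = δ.erase (φ v) := by
    intro v hv
    have h1 : ((σ.erase v).image φ).card = σ.card - 1 := by
      rw [Finset.card_image_of_injOn (hinj.mono (by
        exact_mod_cast Finset.coe_subset.mpr (Finset.erase_subset _ _)))]
      exact Finset.card_erase_of_mem hv
    apply Finset.eq_of_subset_of_card_le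
    · intro y hy
      simp only [Finset.mem_image, Finset.mem_erase] at hy ⊢
      obtain ⟨x, ⟨hxv, hxσ⟩, rfl⟩ := hy
      exact ⟨fun hc => hxv (hinj hxσ hv hc), himg ▸ Finset.mem_image_of_mem φ hxσ⟩
    · rw [h1, Finset.card_erase_of_mem (himg ▸ Finset.mem_image_of_mem φ hv), hcard]
  rw [Finset.card_eq_one]
  refine ⟨v₀, ?_⟩
  ext v
  simp only [Finset.mem_filter, Finset.mem_singleton]
  constructor
  · rintro ⟨hvσ, hv⟩
    rw [him v hvσ] at hv
    have hφv : φ v = w := by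
      by_contra hne
      have hmem : w ∈ δ.erase (φ v) := Finset.mem_erase.mpr ⟨fun hc => hne hc.symm, hw⟩
      rw [hv] at hmem
      exact (Finset.mem_erase.mp hmem).1 rfl
    exact hinj hvσ hv₀σ (by rw [hφv, hv₀])
  · rintro rfl
    exact ⟨hv₀σ, by rw [him _ hv₀σ, hv₀]⟩

/-- Case B: if `φ` maps `σ` onto `τ` with `|σ| = |τ| + 1`, there are exactly two
`v ∈ σ` whose removal yields image `τ`. -/
lemma caseB (φ : V → W) (σ : Finset V) (τ : Finset W)
    (hcard : σ.card = τ.card + 1) (himg : σ.image φ = τ) :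
    (σ.filter (fun v => (σ.erase v).image φ = τ)).card = 2 := by
  have hlt : τ.card < σ.card := by omega
  obtain ⟨v₀, hv₀, u₀, hu₀, hne, heq⟩ :=
    Finset.exists_ne_map_eq_of_card_lt_of_maps_to hlt
      (fun x hx => himg ▸ Finset.mem_image_of_mem φ hx)
  have key : ∀ v ∈ σ, (∃ u ∈ σ, u ≠ v ∧ φ u = φ v) → (σ.erase v).image φ = τ := by
    rintro v hv ⟨u, hu, huv, hφu⟩
    apply subset_antisymm
    · rw [← himg]; exact Finset.image_subset_image (Finset.erase_subset _ _)
    · intro y hy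
      rw [← himg] at hy
      obtain ⟨x, hx, rfl⟩ := Finset.mem_image.mp hy
      by_cases hxv : x = v
      · subst hxv
        exact Finset.mem_image.mpr ⟨u, Finset.mem_erase.mpr ⟨huv, hu⟩, hφu⟩
      · exact Finset.mem_image.mpr ⟨x, Finset.mem_erase.mpr ⟨hxv, hx⟩, rfl⟩
  have hv₀T : (σ.erase v₀).image φ = τ := key v₀ hv₀ ⟨u₀, hu₀, fun hc => hne hc.symm, heq.symm⟩
  have hu₀T : (σ.erase u₀).image φ = τ := key u₀ hu₀ ⟨v₀, hv₀, hne, heq⟩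
  have hinj : Set.InjOn φ (σ.erase v₀) := Finset.injOn_of_card_image_eq (by
    rw [hv₀T, Finset.card_erase_of_mem hv₀]; omega)
  have hTeq : σ.filter (fun v => (σ.erase v).image φ = τ) = {v₀, u₀} := by
    ext v
    simp only [Finset.mem_filter, Finset.mem_insert, Finset.mem_singleton]
    constructor
    · rintro ⟨hvσ, hvT⟩
      by_cases hvv₀ : v = v₀
      · exact Or.inl hvv₀
      right
      have hvmem : v ∈ σ.erase v₀ := Finset.mem_erase.mpr ⟨hvv₀, hvσ⟩
      have hmem : φ v ∈ (σ.erase v).image φ := by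
        rw [hvT, ← himg]; exact Finset.mem_image_of_mem φ hvσ
      obtain ⟨u, hu, hφu⟩ := Finset.mem_image.mp hmem
      have huσ : u ∈ σ := Finset.mem_of_mem_erase hu
      have huv : u ≠ v := (Finset.mem_erase.mp hu).1
      by_cases huv₀ : u = v₀
      · subst huv₀
        have hvu₀ : φ v = φ u₀ := by rw [← hφu, heq]
        exact hinj hvmem (Finset.mem_erase.mpr ⟨fun hc => hne hc.symm, hu₀⟩) hvu₀
      · exact absurd (hinj (Finset.mem_erase.mpr ⟨huv₀, huσ⟩) hvmem hφu) huv
    · rintro (rfl | rfl)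
      · exact ⟨hv₀, hv₀T⟩
      · exact ⟨hu₀, hu₀T⟩
  rw [hTeq, Finset.card_pair hne]

/-- Bijection between the `σ'` indexing set and facet removals. -/
lemma card_S_eq [Fintype V] (φ : V → W) (σ : Finset V) (τ : Finset W)
    (hσ : σ.card = τ.card + 1) :
    (Finset.univ.filter (fun σ' : Finset V =>
        (σ'.image φ = τ ∧ σ'.card = τ.card) ∧ σ' ⊆ σ ∧ σ.card = σ'.card + 1)).card
      = (σ.filter (fun v => (σ.erase v).image φ = τ)).card := by
  symm
  apply Finset.card_bij (fun v _ => σ.erase v)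
  · intro v hv
    rw [Finset.mem_filter] at hv
    obtain ⟨hvσ, hvT⟩ := hv
    rw [Finset.mem_filter]
    have hce : (σ.erase v).card = τ.card := by
      rw [Finset.card_erase_of_mem hvσ]; omega
    exact ⟨Finset.mem_univ _, ⟨hvT, hce⟩, Finset.erase_subset _ _, by omega⟩
  · intro v₁ hv₁ v₂ hv₂ hee
    rw [Finset.mem_filter] at hv₁ hv₂
    by_contra hne
    have hmem : v₁ ∈ σ.erase v₂ := Finset.mem_erase.mpr ⟨hne, hv₁.1⟩
    rw [← hee] at hmem
    exact (Finset.mem_erase.mp hmem).1 rfl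
  · intro σ' hσ'
    rw [Finset.mem_filter] at hσ'
    obtain ⟨-, ⟨himg', hcard'⟩, hsub, -⟩ := hσ'
    have hss : σ' ⊂ σ := HasSubset.Subset.ssubset_of_ne hsub (fun hc => by
      rw [hc] at hcard'; omega)
    obtain ⟨v, hvσ, hvσ'⟩ := Finset.exists_of_ssubset hss
    have hsub2 : σ' ⊆ σ.erase v := fun x hx =>
      Finset.mem_erase.mpr ⟨fun hc => hvσ' (hc ▸ hx), hsub hx⟩
    have heq2 : σ.erase v = σ' := by
      symm
      apply Finset.eq_of_subset_of_card_le hsub2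
      rw [Finset.card_erase_of_mem hvσ]; omega
    refine ⟨v, Finset.mem_filter.mpr ⟨hvσ, by rw [heq2, himg']⟩, heq2⟩

end Helpers

/-- Let `Δ` be the complex consisting of an `n`-simplex `δ` and all its nonempty subsets,
let `φ : Q → Δ` be a simplicial map and let `α` be an `n`-chain of `Q`.
If `φ_* (∂ α) = ∂ δ`, then `φ_* α = δ`. -/
theorem chainPush_eq_of_chainPush_boundary_eq {V W : Type*} [Fintype V] [Fintype W]
    (Q : Finset (Finset V)) (hQ : IsAbstractComplex Q)
    (n : ℕ) (hn : 1 ≤ n) (δ : Finset W) (hδ : δ.card = n + 1)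
    (φ : V → W)
    (hφ : ∀ σ ∈ Q, σ.image φ ∈ δ.powerset.filter fun t => t.Nonempty)
    (α : Finset V → ZMod 2)
    (hα : ∀ σ : Finset V, α σ ≠ 0 → σ ∈ Q ∧ σ.card = n + 1)
    (h : chainPush φ (chainBoundary α)
        = chainBoundary (fun ρ : Finset W => if ρ = δ then 1 else 0)) :
    chainPush φ α = fun ρ : Finset W => if ρ = δ then 1 else 0 := by
  funext ρ
  show chainPush φ α ρ = if ρ = δ then 1 else 0
  by_cases hρ : ρ = δ
  case neg =>
    rw [if_neg hρ]
    apply Finset.sum_eq_zero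
    intro σ hσ
    rw [Finset.mem_filter] at hσ
    by_contra h0
    obtain ⟨hσQ, hcardσ⟩ := hα σ h0
    have h2 := hφ σ hσQ
    rw [Finset.mem_filter, Finset.mem_powerset] at h2
    refine hρ (Finset.eq_of_subset_of_card_le (hσ.2.1 ▸ h2.1) ?_)
    rw [← hσ.2.2, hδ, hcardσ]
  case pos =>
    rw [if_pos hρ, hρ]
    -- pick a vertex of δ and form the facet τ
    have hδne : δ.Nonempty := by
      rw [← Finset.card_pos, hδ]; omega
    obtain ⟨w, hw⟩ := hδne
    set τ : Finset W := δ.erase w with hτdef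
    have hτcard : τ.card = n := by
      rw [hτdef, Finset.card_erase_of_mem hw, hδ]
      omega
    have hkey := congrFun h τ
    -- the right-hand side evaluates to 1
    have hRHS : chainBoundary (fun ρ : Finset W => if ρ = δ then 1 else 0) τ = 1 := by
      unfold chainBoundary
      rw [Finset.sum_ite_eq']
      rw [if_pos]
      rw [Finset.mem_filter]
      exact ⟨Finset.mem_univ _, Finset.erase_subset _ _, by rw [hδ, hτcard]⟩
    -- swap the order of summation on the left-hand side
    have hswap : chainPush φ (chainBoundary α) τ
        = ∑ σ : Finset V, α σ * ((Finset.univ.filter (fun σ' : Finset V =>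
            (σ'.image φ = τ ∧ σ'.card = τ.card) ∧ σ' ⊆ σ ∧ σ.card = σ'.card + 1)).card
              : ZMod 2) := by
      unfold chainPush chainBoundary
      rw [Finset.sum_filter]
      have step1 : ∀ σ' : Finset V,
          (if σ'.image φ = τ ∧ σ'.card = τ.card then
            (∑ σ ∈ Finset.univ.filter (fun σ : Finset V => σ' ⊆ σ ∧ σ.card = σ'.card + 1),
              α σ) else 0)
          = ∑ σ : Finset V, if (σ'.image φ = τ ∧ σ'.card = τ.card) ∧
              σ' ⊆ σ ∧ σ.card = σ'.card + 1 then α σ else 0 := by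
        intro σ'
        split_ifs with hP
        · rw [Finset.sum_filter]
          exact Finset.sum_congr rfl fun σ _ => by simp [hP]
        · symm
          apply Finset.sum_eq_zero
          intro σ _
          rw [if_neg (fun hc => hP hc.1)]
      rw [Finset.sum_congr rfl fun σ' _ => step1 σ']
      rw [Finset.sum_comm]
      refine Finset.sum_congr rfl fun σ _ => ?_
      rw [← Finset.sum_filter, Finset.sum_const, nsmul_eq_mul, mul_comm]
    -- the pointwise identification of the two summands
    have hper : ∀ σ : Finset V,
        α σ * ((Finset.univ.filter (fun σ' : Finset V =>
            (σ'.image φ = τ ∧ σ'.card = τ.card) ∧ σ' ⊆ σ ∧ σ.card = σ'.card + 1)).card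
              : ZMod 2)
        = if σ.image φ = δ ∧ σ.card = δ.card then α σ else 0 := by
      intro σ
      by_cases h0 : α σ = 0
      · rw [h0, zero_mul]
        split_ifs <;> rfl
      obtain ⟨hσQ, hcardσ⟩ := hα σ h0
      have hb := hφ σ hσQ
      rw [Finset.mem_filter, Finset.mem_powerset] at hb
      have hcards' : σ.card = δ.card := by rw [hδ, hcardσ]
      rw [card_S_eq φ σ τ (by rw [hτcard, hcardσ])]
      by_cases hid : σ.image φ = δ
      · rw [if_pos ⟨hid, hcards'⟩, hτdef, caseA φ σ δ w hw hid hcards']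
        simp
      · rw [if_neg (fun hc => hid hc.1)]
        by_cases hT : σ.filter (fun v => (σ.erase v).image φ = τ) = ∅
        · rw [hT]
          simp
        · obtain ⟨v₀, hv₀⟩ := Finset.nonempty_iff_ne_empty.mpr hT
          rw [Finset.mem_filter] at hv₀
          have hsub : τ ⊆ σ.image φ :=
            hv₀.2 ▸ Finset.image_subset_image (Finset.erase_subset _ _)
          have h2 : (σ.image φ).card < δ.card :=
            Finset.card_lt_card (HasSubset.Subset.ssubset_of_ne hb.1 hid)
          have h3 : σ.image φ = τ := by
            symm
            apply Finset.eq_of_subset_of_card_le hsub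
            rw [hδ] at h2
            rw [hτcard]
            omega
          rw [caseB φ σ τ (by rw [hτcard, hcardσ]) h3]
          have h4 : ((2 : ℕ) : ZMod 2) = 0 := by decide
          rw [h4, mul_zero]
    rw [hswap, hRHS] at hkey
    unfold chainPush
    rw [Finset.sum_filter, ← hkey]
    exact Finset.sum_congr rfl fun σ _ => (hper σ).symm
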